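/- arXiv:1111.0554 — 6 statements merged into one kernel-verified Lean document; each statement's English description precedes it below -/
import Mathlib

section
/- Let $U$ be a finite connected simple undirected graph with $n$ vertices, diameter $d \geq 2$, and maximum degree $\Delta \geq 2$, satisfying $\Delta^d - 1 < n(\Delta - 1)$. Then for any vertex $v$ and any vertex subset $A$ with $1 \leq |A| \leq \Delta$, there exists a vertex $u \neq v$ with $\mathrm{dist}(u, A) > d - 2$. -/
open Finset

lemma sphere_card_le {n Δ : ℕ} (U : SimpleGraph (Fin n)) [DecidableRel U.Adj]
    (hconn : U.Connected) (hdeg : U.maxDegree ≤ Δ) (a : Fin n) :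
    ∀ r : ℕ, (univ.filter fun u => U.dist u a = r).card ≤ Δ ^ r := by
  intro r
  induction r with
  | zero =>
    have : (univ.filter fun u => U.dist u a = 0) ⊆ {a} := by
      intro u hu
      simp only [mem_filter, mem_univ, true_and] at hu
      simp [((hconn u a).dist_eq_zero_iff).mp hu]
    simpa using (card_le_card this)
  | succ r ih =>
    have hsub : (univ.filter fun u => U.dist u a = r + 1) ⊆
        (univ.filter fun u => U.dist u a = r).biUnion (fun w => U.neighborFinset w) := by
      intro u hu
      simp only [mem_filter, mem_univ, true_and] at hu
      obtain ⟨p, hp⟩ := (hconn u a).exists_walk_length_eq_dist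
      rw [hu] at hp
      cases p with
      | nil => simp at hp
      | @cons _ w _ h q =>
        simp only [SimpleGraph.Walk.length_cons, Nat.succ_inj] at hp
        have h1 : U.dist w a ≤ r := hp ▸ SimpleGraph.dist_le q
        have h2 : U.dist u w ≤ 1 := by
          simpa using SimpleGraph.dist_le (SimpleGraph.Walk.cons h SimpleGraph.Walk.nil)
        have h3 : r + 1 ≤ 1 + U.dist w a := by
          calc r + 1 = U.dist u a := hu.symm
          _ ≤ U.dist u w + U.dist w a := hconn.dist_triangle
          _ ≤ 1 + U.dist w a := by omega
        have hwa : U.dist w a = r := by omega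
        simp only [mem_biUnion, mem_filter, mem_univ, true_and]
        exact ⟨w, hwa, (SimpleGraph.mem_neighborFinset _ _ _).mpr h.symm⟩
    calc (univ.filter fun u => U.dist u a = r + 1).card
        ≤ ((univ.filter fun u => U.dist u a = r).biUnion (fun w => U.neighborFinset w)).card :=
          card_le_card hsub
      _ ≤ (univ.filter fun u => U.dist u a = r).card * Δ := by
          apply card_biUnion_le_card_mul
          intro w _
          rw [SimpleGraph.card_neighborFinset_eq_degree]
          exact (U.degree_le_maxDegree w).trans hdeg
      _ ≤ Δ ^ r * Δ := Nat.mul_le_mul_right _ ih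
      _ = Δ ^ (r + 1) := (pow_succ Δ r).symm

lemma ball_card_le {n Δ : ℕ} (U : SimpleGraph (Fin n)) [DecidableRel U.Adj]
    (hconn : U.Connected) (hdeg : U.maxDegree ≤ Δ) (a : Fin n) (r : ℕ) :
    (univ.filter fun u => U.dist u a ≤ r).card ≤ ∑ i ∈ range (r + 1), Δ ^ i := by
  have hsub : (univ.filter fun u => U.dist u a ≤ r) ⊆
      (range (r + 1)).biUnion fun i => univ.filter fun u => U.dist u a = i := by
    intro u hu
    simp only [mem_filter, mem_univ, true_and] at hu
    simp only [mem_biUnion, mem_range, mem_filter, mem_univ, true_and]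
    exact ⟨U.dist u a, by omega, rfl⟩
  calc (univ.filter fun u => U.dist u a ≤ r).card
      ≤ _ := card_le_card hsub
    _ ≤ ∑ i ∈ range (r + 1), (univ.filter fun u => U.dist u a = i).card := card_biUnion_le
    _ ≤ ∑ i ∈ range (r + 1), Δ ^ i := sum_le_sum fun i _ => sphere_card_le U hconn hdeg a i

/-- In a connected graph with `n` vertices, diameter `d ≥ 2` and maximum degree
`Δ ≥ 2` satisfying `Δ^d - 1 < n(Δ-1)`, for any vertex `v` and any set `A` with
`1 ≤ |A| ≤ Δ` there is a vertex `u ≠ v` with `dist(u, A) > d - 2`. -/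
theorem stmt_2 (n Δ d : ℕ) (hΔ : 2 ≤ Δ) (hd : 2 ≤ d)
    (U : SimpleGraph (Fin n)) [DecidableRel U.Adj]
    (hconn : U.Connected) (hdiam : U.diam = d) (hdeg : U.maxDegree ≤ Δ)
    (hvol : Δ ^ d - 1 < n * (Δ - 1))
    (v : Fin n) (A : Finset (Fin n)) (hA : A.Nonempty) (hAcard : A.card ≤ Δ) :
    ∃ u : Fin n, u ≠ v ∧ d - 2 < A.inf' hA (fun a => U.dist u a) := by
  classical
  set S : ℕ := ∑ i ∈ range d, Δ ^ i with hS
  -- S < n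
  have hSn : S < n := by
    by_contra hle
    push_neg at hle
    have hmul : S * (Δ - 1) = Δ ^ d - 1 := by
      have h1 : (1:ℕ) ≤ Δ ^ d := Nat.one_le_pow _ _ (by omega)
      have h0 : (1:ℕ) ≤ Δ := by omega
      zify [h0, h1]
      rw [hS]
      have := geom_sum_mul (Δ : ℤ) d
      push_cast at this ⊢
      linarith
    have : n * (Δ - 1) ≤ Δ ^ d - 1 := hmul ▸ Nat.mul_le_mul_right _ hle
    omega
  set B : Finset (Fin n) := A.biUnion fun a => univ.filter fun u => U.dist u a ≤ d - 2 with hB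
  have hBcard : B.card ≤ Δ * ∑ i ∈ range (d - 1), Δ ^ i := by
    calc B.card ≤ A.card * (∑ i ∈ range (d - 2 + 1), Δ ^ i) :=
          card_biUnion_le_card_mul _ _ _ fun a _ => ball_card_le U hconn hdeg a (d - 2)
      _ ≤ Δ * ∑ i ∈ range (d - 1), Δ ^ i := by
          rw [show d - 2 + 1 = d - 1 by omega]
          exact Nat.mul_le_mul_right _ hAcard
  have hins : (insert v B).card < n := by
    have h1 : (insert v B).card ≤ B.card + 1 := card_insert_le _ _
    have h2 : S = Δ * (∑ i ∈ range (d - 1), Δ ^ i) + 1 := by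
      conv_lhs => rw [hS, show d = (d - 1) + 1 by omega]
      exact geom_sum_succ
    omega
  obtain ⟨u, hu⟩ : ∃ u : Fin n, u ∉ insert v B := by
    by_contra hall
    push_neg at hall
    have : (univ : Finset (Fin n)) ⊆ insert v B := fun x _ => hall x
    have := card_le_card this
    simp only [card_univ, Fintype.card_fin] at this
    omega
  simp only [mem_insert, not_or] at hu
  refine ⟨u, hu.1, ?_⟩
  rw [Finset.lt_inf'_iff]
  intro a ha
  by_contra hlt
  push_neg at hlt
  exact hu.2 (mem_biUnion.mpr ⟨a, ha, mem_filter.mpr ⟨mem_univ u, hlt⟩⟩)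
end

section
/- Let $G$ be a finite undirected graph and let $u, v, x, w$ be vertices, all in one connected component. Let $G_1 = G + uv$ (graph with edge $uv$ added) and $G_2 = G + xv$. Define $\mathrm{improve}_u(w) = \mathrm{dist}_G(u,w) - \mathrm{dist}_{G_1}(u,w)$ and $\mathrm{improve}_x(w) = \mathrm{dist}_G(x,w) - \mathrm{dist}_{G_2}(x,w)$. If $\mathrm{improve}_u(w) > 0$, then $\mathrm{improve}_x(w) \geq \mathrm{improve}_u(w) - \mathrm{dist}_G(u, x)$. -/
open SimpleGraph

/-- Any walk in `G + uv` from `a` to `w` either yields a `G`-walk of no greater length,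
or a `G`-walk from `v` (or `u`) to `w` of length at least one less. -/
lemma walk_cases_aux {V : Type*} (G : SimpleGraph V) (u v w : V) :
    ∀ {a : V} (p : (G ⊔ SimpleGraph.fromEdgeSet {s(u, v)}).Walk a w),
      (∃ q : G.Walk a w, q.length ≤ p.length) ∨
      (∃ q : G.Walk v w, q.length + 1 ≤ p.length) ∨
      (∃ q : G.Walk u w, q.length + 1 ≤ p.length) := by
  intro a p
  induction p with
  | nil => exact Or.inl ⟨.nil, le_rfl⟩
  | @cons a b _ h p ih =>
    rw [SimpleGraph.Walk.length_cons]
    rw [SimpleGraph.sup_adj, SimpleGraph.fromEdgeSet_adj, Set.mem_singleton_iff,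
      Sym2.eq_iff] at h
    rcases h with hG | ⟨hmem, hne⟩
    · rcases ih with ⟨q, hq⟩ | ⟨q, hq⟩ | ⟨q, hq⟩
      · exact Or.inl ⟨.cons hG q, by simp only [SimpleGraph.Walk.length_cons]; omega⟩
      · exact Or.inr <| Or.inl ⟨q, hq.trans (Nat.le_succ _)⟩
      · exact Or.inr <| Or.inr ⟨q, hq.trans (Nat.le_succ _)⟩
    · rcases hmem with ⟨rfl, rfl⟩ | ⟨rfl, rfl⟩
      · -- a = u, b = v
        rcases ih with ⟨q, hq⟩ | ⟨q, hq⟩ | ⟨q, hq⟩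
        · exact Or.inr <| Or.inl ⟨q, Nat.succ_le_succ hq⟩
        · exact Or.inr <| Or.inl ⟨q, hq.trans (Nat.le_succ _)⟩
        · exact Or.inr <| Or.inr ⟨q, hq.trans (Nat.le_succ _)⟩
      · -- a = v, b = u
        rcases ih with ⟨q, hq⟩ | ⟨q, hq⟩ | ⟨q, hq⟩
        · exact Or.inr <| Or.inr ⟨q, Nat.succ_le_succ hq⟩
        · exact Or.inr <| Or.inl ⟨q, hq.trans (Nat.le_succ _)⟩
        · exact Or.inr <| Or.inr ⟨q, hq.trans (Nat.le_succ _)⟩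

/-- If adding edge `uv` brings `u` strictly closer to `w`, then adding edge `xv`
brings `x` closer to `w` by at least as much, minus `dist(u,x)`. -/
theorem stmt_6 {V : Type*} [Fintype V] (G : SimpleGraph V) (u v x w : V)
    (hconn : G.Reachable u v ∧ G.Reachable u x ∧ G.Reachable u w)
    (himp : ((G.dist u w : ℤ) - ((G ⊔ SimpleGraph.fromEdgeSet {s(u, v)}).dist u w : ℤ)) > 0) :
    (G.dist x w : ℤ) - ((G ⊔ SimpleGraph.fromEdgeSet {s(x, v)}).dist x w : ℤ) ≥
      ((G.dist u w : ℤ) - ((G ⊔ SimpleGraph.fromEdgeSet {s(u, v)}).dist u w : ℤ))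
        - (G.dist u x : ℤ) := by
  obtain ⟨huv, hux, huw⟩ := hconn
  have hvw : G.Reachable v w := huv.symm.trans huw
  have hxw : G.Reachable x w := hux.symm.trans huw
  -- (3) triangle inequality: dist u w ≤ dist u x + dist x w
  have htri : G.dist u w ≤ G.dist u x + G.dist x w := by
    obtain ⟨p, hp⟩ := hux.exists_walk_length_eq_dist
    obtain ⟨q, hq⟩ := hxw.exists_walk_length_eq_dist
    rw [← hp, ← hq, ← SimpleGraph.Walk.length_append]
    exact SimpleGraph.dist_le _
  set G1 := G ⊔ SimpleGraph.fromEdgeSet {s(u, v)} with hG1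
  set G2 := G ⊔ SimpleGraph.fromEdgeSet {s(x, v)} with hG2
  have hle1 : G ≤ G1 := le_sup_left
  have hle2 : G ≤ G2 := le_sup_left
  -- (2) G1.dist u w ≥ 1 + G.dist v w
  have h1 : G.dist v w + 1 ≤ G1.dist u w := by
    have hr1 : G1.Reachable u w := huw.mono hle1
    obtain ⟨p, hp⟩ := hr1.exists_walk_length_eq_dist
    rcases walk_cases_aux G u v w p with ⟨q, hq⟩ | ⟨q, hq⟩ | ⟨q, hq⟩
    · exfalso
      have : G.dist u w ≤ G1.dist u w := le_trans (SimpleGraph.dist_le q) (hp ▸ hq)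
      omega
    · calc G.dist v w + 1 ≤ q.length + 1 := by
            exact Nat.add_le_add_right (SimpleGraph.dist_le q) 1
        _ ≤ p.length := hq
        _ = G1.dist u w := hp
    · exfalso
      have : G.dist u w ≤ G1.dist u w := by
        calc G.dist u w ≤ q.length := SimpleGraph.dist_le q
          _ ≤ p.length := le_trans (Nat.le_succ _) hq
          _ = G1.dist u w := hp
      omega
  -- (1) G2.dist x w ≤ 1 + G.dist v w
  have h2 : G2.dist x w ≤ G.dist v w + 1 := by
    obtain ⟨q, hq⟩ := hvw.exists_walk_length_eq_dist
    by_cases hxv : x = v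
    · subst hxv
      calc G2.dist x w ≤ (q.mapLe hle2).length := SimpleGraph.dist_le _
        _ = q.length := SimpleGraph.Walk.length_map _ _
        _ ≤ G.dist x w + 1 := by omega
    · have hadj : G2.Adj x v := by
        rw [hG2, SimpleGraph.sup_adj, SimpleGraph.fromEdgeSet_adj]
        exact Or.inr ⟨rfl, hxv⟩
      calc G2.dist x w ≤ (SimpleGraph.Walk.cons hadj (q.mapLe hle2)).length :=
            SimpleGraph.dist_le _
        _ = q.length + 1 := by simp [SimpleGraph.Walk.length_map]
        _ = G.dist v w + 1 := by omega
  -- combine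
  omega
end

section
/- Let $G$ be a finite undirected graph with $n$ vertices, all in one connected component, and let $u, v, x$ be vertices with $uv \notin E(G)$. Suppose adding the edge $uv$ decreases the quantity $\sum_{w} \mathrm{dist}(u, w)$ by $s$, where $s > n \cdot \mathrm{dist}(u, x)$. Then adding the edge $xv$ to $G$ decreases $\sum_w \mathrm{dist}(x, w)$ by at least $s - n \cdot \mathrm{dist}(u, x)$. -/
open Finset

open SimpleGraph in
private lemma walk_lb {V : Type*} {G : SimpleGraph V} (hconn : G.Connected)
    (u v w : V) : ∀ {a : V} (p : (G ⊔ SimpleGraph.fromEdgeSet {s(u, v)}).Walk a w),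
    min (G.dist a w) (min (G.dist a u + 1 + G.dist v w) (G.dist a v + 1 + G.dist u w))
      ≤ p.length := by
  intro a p
  induction p with
  | nil => simp
  | @cons a b w hab p ih =>
    have step : ∀ c : V, G.Adj a b → G.dist a c ≤ 1 + G.dist b c := by
      intro c h
      calc G.dist a c ≤ G.dist a b + G.dist b c := hconn.dist_triangle
        _ ≤ 1 + G.dist b c := by
            have : G.dist a b ≤ 1 := by
              obtain ⟨q, hq⟩ : ∃ q : G.Walk a b, q.length = 1 :=
                ⟨h.toWalk, by simp⟩
              calc G.dist a b ≤ q.length := SimpleGraph.dist_le q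
                _ = 1 := hq
            omega
    rw [SimpleGraph.Walk.length_cons]
    rcases hab with h | h
    · -- edge of G
      have h1 := step w h
      have h2 := step u h
      have h3 := step v h
      omega
    · rw [SimpleGraph.fromEdgeSet_adj] at h
      have hmem := h.1
      simp only [Set.mem_singleton_iff, Sym2.eq, Sym2.rel_iff', Prod.mk.injEq,
        Prod.swap_prod_mk] at hmem
      -- (a,b) = (u,v) or (a,b) = (v,u)
      rcases hmem with ⟨rfl, rfl⟩ | ⟨rfl, rfl⟩
      · -- a = u, b = v
        have hd : (0:ℕ) = G.dist a a := (SimpleGraph.dist_self (v := a)).symm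
        have hcm : G.dist b a = G.dist a b := SimpleGraph.dist_comm ..
        omega
      · -- a = v, b = u
        have hd : (0:ℕ) = G.dist a a := (SimpleGraph.dist_self (v := a)).symm
        have hcm : G.dist b a = G.dist a b := SimpleGraph.dist_comm ..
        omega

/-- Friend-decrease lemma: if adding edge `uv` decreases the total distance from `u`
by `s > n·dist(u,x)`, then adding edge `xv` decreases the total distance from `x`
by at least `s - n·dist(u,x)`. -/
theorem stmt_7 (n : ℕ) (G : SimpleGraph (Fin n)) (hconn : G.Connected)
    (u v x : Fin n) (huv : ¬ G.Adj u v) (s : ℤ)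
    (hs : (∑ w : Fin n, (G.dist u w : ℤ))
        - (∑ w : Fin n, ((G ⊔ SimpleGraph.fromEdgeSet {s(u, v)}).dist u w : ℤ)) = s)
    (hbig : s > (n : ℤ) * (G.dist u x : ℤ)) :
    (∑ w : Fin n, (G.dist x w : ℤ))
        - (∑ w : Fin n, ((G ⊔ SimpleGraph.fromEdgeSet {s(x, v)}).dist x w : ℤ))
      ≥ s - (n : ℤ) * (G.dist u x : ℤ) := by
  set G' := G ⊔ SimpleGraph.fromEdgeSet {s(u, v)} with hG'
  set G'' := G ⊔ SimpleGraph.fromEdgeSet {s(x, v)} with hG''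
  have hle' : G ≤ G' := le_sup_left
  have hle'' : G ≤ G'' := le_sup_left
  have hconn' : G'.Connected := hconn.mono hle'
  -- per-vertex inequality
  have key : ∀ w : Fin n,
      (G.dist x w : ℤ) - (G''.dist x w : ℤ)
        ≥ (G.dist u w : ℤ) - (G'.dist u w : ℤ) - (G.dist u x : ℤ) := by
    intro w
    -- A: lower bound on G'.dist u w
    obtain ⟨p, hp⟩ := hconn'.exists_walk_length_eq_dist u w
    have hA := walk_lb hconn u v w p
    rw [hp] at hA
    have hA0 : G.dist u u = 0 := by simp
    have hAcm : G.dist u v = G.dist v u := SimpleGraph.dist_comm ..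
    -- B: G''.dist x w ≤ G.dist x w
    have hB : G''.dist x w ≤ G.dist x w := by
      obtain ⟨q, hq⟩ := hconn.exists_walk_length_eq_dist x w
      calc G''.dist x w ≤ (q.mapLe hle'').length := SimpleGraph.dist_le _
        _ = q.length := by simp [SimpleGraph.Walk.mapLe]
        _ = G.dist x w := hq
    -- C: G''.dist x w ≤ 1 + G.dist v w
    have hC : G''.dist x w ≤ 1 + G.dist v w := by
      obtain ⟨q, hq⟩ := hconn.exists_walk_length_eq_dist v w
      by_cases hxv : x = v
      · subst hxv
        calc G''.dist x w ≤ (q.mapLe hle'').length := SimpleGraph.dist_le _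
          _ = q.length := by simp [SimpleGraph.Walk.mapLe]
          _ ≤ 1 + G.dist x w := by omega
      · have hadj : G''.Adj x v := by
          rw [hG'', SimpleGraph.sup_adj, SimpleGraph.fromEdgeSet_adj]
          exact Or.inr ⟨rfl, hxv⟩
        calc G''.dist x w ≤ (SimpleGraph.Walk.cons hadj (q.mapLe hle'')).length :=
              SimpleGraph.dist_le _
          _ = q.length + 1 := by simp [SimpleGraph.Walk.mapLe]
          _ = 1 + G.dist v w := by omega
    -- D: triangle
    have hD : G.dist u w ≤ G.dist u x + G.dist x w := hconn.dist_triangle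
    omega
  have hsum : ∑ w : Fin n, ((G.dist x w : ℤ) - (G''.dist x w : ℤ))
      ≥ ∑ w : Fin n, ((G.dist u w : ℤ) - (G'.dist u w : ℤ) - (G.dist u x : ℤ)) :=
    Finset.sum_le_sum fun w _ => key w
  simp only [Finset.sum_sub_distrib, Finset.sum_const, Finset.card_univ,
    Fintype.card_fin, nsmul_eq_mul] at hsum
  omega
end

section
/- Let $T$ be a finite tree with $n \geq 2$ vertices and diameter $d$, and let $P = v_0 v_1 \cdots v_d$ be a path realizing the diameter. For $1 \leq i \leq d$, let $A_i$ be the set of vertices of $T$ whose path to $P$ meets $P$ first at $v_i$ (with $v_i \in A_i$), and let $a(i) = |A_i| \geq 1$. Suppose there exist indices $1 \leq i_1 < i_2 < \cdots < i_t < d$ with $i_{j+1} \geq i_j + 1$ such that for all $1 \leq j < t$: $a(i_j + 1) \geq \sum_{k = i_j + 2}^{d} a(k)$. Then $n \geq 2^{t-1} - 1$, i.e., $t \leq 1 + \log_2(n + 1)$. -/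
open Finset

/-- The set of vertices of the tree `T` hanging off the vertex `v i` of a path
`v 0, v 1, …, v d`: those vertices whose closest path vertex is `v i`. -/
noncomputable def hangSet {V : Type*} [Fintype V] (T : SimpleGraph V) (d : ℕ)
    (v : ℕ → V) (i : ℕ) : Finset V :=
  Finset.univ.filter fun x => ∀ j ≤ d, T.dist x (v i) ≤ T.dist x (v j)

/-- Equilibrium condition along a diametral path of a tree forces the number of
dominating indices to be logarithmic: `n ≥ 2^(t-1) - 1`. -/
theorem stmt_13 {V : Type*} [Fintype V] (T : SimpleGraph V) (hT : T.IsTree)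
    (n d : ℕ) (hn : Fintype.card V = n) (hn2 : 2 ≤ n)
    (hdiam : T.diam = d)
    (v : ℕ → V) (hpath : ∀ i < d, T.Adj (v i) (v (i + 1)))
    (hinj : ∀ i ≤ d, ∀ j ≤ d, v i = v j → i = j)
    (hreal : T.dist (v 0) (v d) = d)
    (t : ℕ) (idx : ℕ → ℕ) (hmono : StrictMonoOn idx (Set.Icc 1 t))
    (h1 : 1 ≤ idx 1) (hlast : idx t < d) (ht : 1 ≤ t)
    (hdom : ∀ j, 1 ≤ j → j < t →
      (∑ k ∈ Finset.Icc (idx j + 2) d, (hangSet T d v k).card)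
        ≤ (hangSet T d v (idx j + 1)).card) :
    2 ^ (t - 1) - 1 ≤ n := by
  classical
  have hC : T.Connected := hT.isConnected
  have hA : T.IsAcyclic := hT.IsAcyclic
  -- chain walks along the path
  have chain : ∀ i, i ≤ d → ∀ j, i ≤ j → j ≤ d →
      ∃ w : T.Walk (v i) (v j), w.length = j - i ∧
        (i < j → s(v i, v (i + 1)) ∈ w.edges) := by
    intro i hid j hij hjd
    induction j, hij using Nat.le_induction with
    | base => exact ⟨SimpleGraph.Walk.nil, by simp, by omega⟩
    | succ j hij ih =>
      obtain ⟨w, hlen, hedge⟩ := ih (by omega)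
      refine ⟨w.concat (hpath j (by omega)), ?_, ?_⟩
      · rw [SimpleGraph.Walk.length_concat]; omega
      · intro _
        rw [SimpleGraph.Walk.edges_concat, List.concat_eq_append, List.mem_append]
        rcases Nat.lt_or_ge i j with h | h
        · exact Or.inl (hedge h)
        · have : i = j := by omega
          subst this
          exact Or.inr (List.mem_singleton_self _)
  -- the path is geodesic
  have geo : ∀ i j, i ≤ j → j ≤ d → T.dist (v i) (v j) = j - i := by
    intro i j hij hjd
    have h1 : T.dist (v 0) (v i) ≤ i := by
      obtain ⟨w, hlen, -⟩ := chain 0 (by omega) i (by omega) (by omega)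
      simpa [hlen] using SimpleGraph.dist_le w
    have h2 : T.dist (v i) (v j) ≤ j - i := by
      obtain ⟨w, hlen, -⟩ := chain i (by omega) j hij hjd
      simpa [hlen] using SimpleGraph.dist_le w
    have h3 : T.dist (v j) (v d) ≤ d - j := by
      obtain ⟨w, hlen, -⟩ := chain j hjd d hjd (le_refl d)
      simpa [hlen] using SimpleGraph.dist_le w
    have t1 : T.dist (v 0) (v d) ≤ T.dist (v 0) (v i) + T.dist (v i) (v d) :=
      hC.dist_triangle
    have t2 : T.dist (v i) (v d) ≤ T.dist (v i) (v j) + T.dist (v j) (v d) :=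
      hC.dist_triangle
    omega
  -- every walk between path vertices uses the first edge of the segment
  have keyedge : ∀ i j, i < j → j ≤ d → ∀ w : T.Walk (v i) (v j),
      s(v i, v (i + 1)) ∈ w.edges := by
    intro i j hij hjd w
    obtain ⟨c, hclen, hcedge⟩ := chain i (by omega) j (by omega) hjd
    have hcpath : c.IsPath := by
      apply c.isPath_of_length_eq_dist
      rw [geo i j (by omega) hjd, hclen]
    have hbpath : w.bypass.IsPath := SimpleGraph.Walk.bypass_isPath w
    have huniq := (SimpleGraph.isAcyclic_iff_path_unique.mp hA)
      (⟨w.bypass, hbpath⟩ : T.Path (v i) (v j)) ⟨c, hcpath⟩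
    have hbc : w.bypass = c := congrArg Subtype.val huniq
    exact SimpleGraph.Walk.edges_bypass_subset w (hbc ▸ hcedge hij)
  -- hangSets of distinct path vertices are disjoint
  have disj : ∀ i j, i < j → j ≤ d → ∀ x,
      x ∈ hangSet T d v i → x ∈ hangSet T d v j → False := by
    intro i j hij hjd x hxi hxj
    rw [hangSet, Finset.mem_filter] at hxi hxj
    have hxi := hxi.2
    have hxj := hxj.2
    have hm : T.dist x (v j) = T.dist x (v i) :=
      le_antisymm (hxj i (by omega)) (hxi j hjd)
    set m := T.dist x (v i) with hmdef
    have hm0 : m ≠ 0 := by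
      intro h
      have hxvi : x = v i := (hC.dist_eq_zero_iff).mp h
      have hxvj : x = v j := (hC.dist_eq_zero_iff).mp (by omega)
      exact absurd (hinj i (by omega) j hjd (hxvi ▸ hxvj)) (by omega)
    obtain ⟨w1', hw1len⟩ := (hC x (v i)).exists_walk_length_eq_dist
    obtain ⟨w2, hw2len⟩ := (hC x (v j)).exists_walk_length_eq_dist
    have hW := keyedge i j hij hjd (w1'.reverse.append w2)
    rw [SimpleGraph.Walk.edges_append, List.mem_append] at hW
    rcases hW with hW | hW
    · -- edge in the walk from v i to x
      have hsup : v (i + 1) ∈ w1'.reverse.support :=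
        SimpleGraph.Walk.snd_mem_support_of_mem_edges _ hW
      obtain ⟨q, r, hqr⟩ := SimpleGraph.Walk.mem_support_iff_exists_append.mp hsup
      have hlen : q.length + r.length = m := by
        have := congrArg SimpleGraph.Walk.length hqr
        rw [SimpleGraph.Walk.length_append, SimpleGraph.Walk.length_reverse] at this
        omega
      have hq : T.dist (v i) (v (i + 1)) ≤ q.length := SimpleGraph.dist_le q
      have hr : T.dist (v (i + 1)) x ≤ r.length := SimpleGraph.dist_le r
      have hd1 : T.dist (v i) (v (i + 1)) = 1 := by
        have := geo i (i + 1) (by omega) (by omega); omega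
      have hmin : m ≤ T.dist x (v (i + 1)) := hxi (i + 1) (by omega)
      rw [SimpleGraph.dist_comm] at hr
      omega
    · -- edge in the walk from x to v j
      have hsup : v i ∈ w2.support :=
        SimpleGraph.Walk.fst_mem_support_of_mem_edges _ hW
      obtain ⟨q, r, hqr⟩ := SimpleGraph.Walk.mem_support_iff_exists_append.mp hsup
      have hlen : q.length + r.length = m := by
        have := congrArg SimpleGraph.Walk.length hqr
        rw [SimpleGraph.Walk.length_append] at this
        omega
      have hq : T.dist x (v i) ≤ q.length := SimpleGraph.dist_le q
      have hr : T.dist (v i) (v j) ≤ r.length := SimpleGraph.dist_le r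
      have hd1 : T.dist (v i) (v j) = j - i := geo i j (by omega) hjd
      omega
  -- each hangSet of a path vertex is nonempty
  have one_le : ∀ k, k ≤ d → 1 ≤ (hangSet T d v k).card := by
    intro k hkd
    have : v k ∈ hangSet T d v k := by
      rw [hangSet, Finset.mem_filter]
      exact ⟨Finset.mem_univ _, fun j _ => by
        rw [SimpleGraph.dist_self]; exact Nat.zero_le _⟩
    exact Finset.card_pos.mpr ⟨v k, this⟩
  -- sums of cards of hangSets over path indices are at most n
  have card_sum : ∀ s : Finset ℕ, (∀ k ∈ s, k ≤ d) →
      ∑ k ∈ s, (hangSet T d v k).card ≤ n := by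
    intro s hs
    rw [← hn]
    calc ∑ k ∈ s, (hangSet T d v k).card
        = (s.biUnion (hangSet T d v)).card := by
          rw [Finset.card_biUnion]
          intro a ha b hb hab
          rw [Function.onFun, Finset.disjoint_left]
          intro x hxa hxb
          rcases Nat.lt_or_ge a b with h | h
          · exact disj a b h (hs b hb) x hxa hxb
          · exact disj b a (by omega) (hs a ha) x hxb hxa
      _ ≤ Finset.univ.card := Finset.card_le_univ _
      _ = Fintype.card V := rfl
  have idxmono : ∀ j, 1 ≤ j → j ≤ t → idx j ≤ idx t := by
    intro j hj1 hjt
    rcases eq_or_lt_of_le hjt with h | h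
    · rw [h]
    · exact le_of_lt (hmono ⟨hj1, hjt⟩ ⟨ht, le_refl t⟩ h)
  -- the key recursion
  set S : ℕ → ℕ := fun j => ∑ k ∈ Finset.Icc (idx j + 1) d, (hangSet T d v k).card
    with hS
  have hrec : ∀ m, m ≤ t - 1 → 2 ^ m ≤ S (t - m) := by
    intro m hm
    induction m with
    | zero =>
      simp only [Nat.sub_zero, hS]
      have hd : d ∈ Finset.Icc (idx t + 1) d := by
        rw [Finset.mem_Icc]; omega
      calc (2 : ℕ) ^ 0 = 1 := by norm_num
        _ ≤ (hangSet T d v d).card := one_le d (le_refl d)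
        _ ≤ _ := Finset.single_le_sum (f := fun k => (hangSet T d v k).card) (fun _ _ => Nat.zero_le _) hd
    | succ m ih =>
      obtain ⟨j, hj⟩ : ∃ j, t - (m + 1) = j := ⟨_, rfl⟩
      rw [hj]
      have hj1 : 1 ≤ j := by omega
      have hjt : j < t := by omega
      have hjd : idx j < d := by
        have := idxmono j hj1 (by omega); omega
      have hsplit : Finset.Icc (idx j + 1) d
          = insert (idx j + 1) (Finset.Icc (idx j + 2) d) := by
        ext k
        simp only [Finset.mem_Icc, Finset.mem_insert]
        omega
      have hnotmem : idx j + 1 ∉ Finset.Icc (idx j + 2) d := by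
        rw [Finset.mem_Icc]; omega
      have hSj : S j = (hangSet T d v (idx j + 1)).card
          + ∑ k ∈ Finset.Icc (idx j + 2) d, (hangSet T d v k).card := by
        rw [hS]
        simp only
        rw [hsplit, Finset.sum_insert hnotmem]
      have hsub : Finset.Icc (idx (j + 1) + 1) d ⊆ Finset.Icc (idx j + 2) d := by
        intro k hk
        rw [Finset.mem_Icc] at hk ⊢
        have : idx j < idx (j + 1) := hmono ⟨hj1, by omega⟩ ⟨by omega, by omega⟩ (by omega)
        omega
      have hSle : S (j + 1) ≤ ∑ k ∈ Finset.Icc (idx j + 2) d, (hangSet T d v k).card :=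
        Finset.sum_le_sum_of_subset hsub
      have hdomj := hdom j hj1 hjt
      have hih : 2 ^ m ≤ S (j + 1) := by
        have hteq : t - m = j + 1 := by omega
        have := ih (by omega)
        rwa [hteq] at this
      calc (2 : ℕ) ^ (m + 1) = 2 ^ m + 2 ^ m := by ring
        _ ≤ S j := by omega
  have hfinal : 2 ^ (t - 1) ≤ S 1 := by
    have := hrec (t - 1) (le_refl _)
    have ht1 : t - (t - 1) = 1 := by omega
    rwa [ht1] at this
  have hSn : S 1 ≤ n := by
    apply card_sum
    intro k hk
    rw [Finset.mem_Icc] at hk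
    omega
  omega
end

section
/- Let $G$ be a finite connected undirected graph on $n$ vertices and $r \geq 1$ an integer. Suppose a vertex $u$ satisfies: the ball $B_{r+1}(u) = \{v : \mathrm{dist}(u,v) \leq r+1\}$ induces a subgraph containing a cycle. Then there exists an edge $xy$ of $G$ with $\mathrm{dist}(x, u) \leq r + 1$ such that removing $xy$ keeps the graph connected and increases each distance $\mathrm{dist}(x, w)$ (over all vertices $w$) by at most $1 + 2r$; in particular $\sum_w \mathrm{dist}_{G - xy}(x, w) \leq \sum_w \mathrm{dist}_G(x, w) + n(1 + 2r)$. -/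
open Finset

open SimpleGraph in
/-- If a path ends at `t` and contains the edge `s(c,t)`, then that edge is the last one,
so there is a walk to `c` of length one less. -/
lemma aux_endpoint_edge {V : Type*} {c : V} :
    ∀ {G : SimpleGraph V} {u t : V} (p : G.Walk u t), p.IsPath → s(c, t) ∈ p.edges →
      ∃ q : G.Walk u c, q.length + 1 = p.length := by
  intro G u t p
  induction p with
  | nil => simp
  | @cons a b t h p' ih =>
    intro hp he
    rw [SimpleGraph.Walk.edges_cons, List.mem_cons] at he
    rcases he with he | he
    · rw [Sym2.eq_iff] at he
      rcases he with ⟨rfl, rfl⟩ | ⟨rfl, rfl⟩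
      · have hnil : p' = SimpleGraph.Walk.nil :=
          (SimpleGraph.Walk.isPath_iff_eq_nil (p := p')).mp hp.of_cons
        subst hnil
        exact ⟨SimpleGraph.Walk.nil, by simp⟩
      · exfalso
        have := SimpleGraph.Walk.isPath_iff_eq_nil.mp hp
        simp at this
    · obtain ⟨q', hq'⟩ := ih hp.of_cons he
      exact ⟨SimpleGraph.Walk.cons h q', by simp [← hq']⟩

open SimpleGraph in
/-- Given a detour `D` from `x` to `y` avoiding the edge `s(x,y)`, every walk in `G`
can be converted to a walk in `G.deleteEdges {s(x,y)}` by replacing each use of the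
edge by the detour. -/
lemma aux_replace {V : Type*} [DecidableEq V] {G : SimpleGraph V} {x y : V}
    (D : (G.deleteEdges {s(x, y)}).Walk x y) :
    ∀ {a b : V} (p : G.Walk a b),
      ∃ q : (G.deleteEdges {s(x, y)}).Walk a b,
        q.length + p.edges.count s(x, y) ≤ p.length + p.edges.count s(x, y) * D.length := by
  intro a b p
  induction p with
  | nil => exact ⟨SimpleGraph.Walk.nil, by simp⟩
  | @cons a c b h p' ih =>
    obtain ⟨q', hq'⟩ := ih
    by_cases he : s(a, c) = s(x, y)
    · have hcount : ((SimpleGraph.Walk.cons h p').edges).count s(x, y)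
          = p'.edges.count s(x, y) + 1 := by
        simp [SimpleGraph.Walk.edges_cons, List.count_cons, he]
      have hmul : (p'.edges.count s(x, y) + 1) * D.length
          = p'.edges.count s(x, y) * D.length + D.length := by ring
      obtain ⟨Dq, hDq⟩ : ∃ Dq : (G.deleteEdges {s(x, y)}).Walk a b,
          Dq.length = D.length + q'.length := by
        rcases Sym2.eq_iff.mp he with ⟨rfl, rfl⟩ | ⟨rfl, rfl⟩
        · exact ⟨D.append q', by simp⟩
        · exact ⟨D.reverse.append q', by simp⟩
      refine ⟨Dq, ?_⟩
      rw [hcount, hDq, SimpleGraph.Walk.length_cons, hmul]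
      omega
    · refine ⟨SimpleGraph.Walk.cons (by simp [h, he]) q', ?_⟩
      have hcount : ((SimpleGraph.Walk.cons h p').edges).count s(x, y)
          = p'.edges.count s(x, y) := by
        simp [SimpleGraph.Walk.edges_cons, List.count_cons, he]
      rw [hcount]
      simp only [SimpleGraph.Walk.length_cons]
      omega

/-- If the ball of radius `r+1` around `u` in a connected graph induces a subgraph
containing a cycle, then there is an edge `xy` with `dist(x,u) ≤ r+1` whose removal
keeps the graph connected and increases every distance from `x` by at most `1+2r`. -/
theorem stmt_14 (n r : ℕ) (hr : 1 ≤ r) (G : SimpleGraph (Fin n))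
    (hconn : G.Connected) (u : Fin n)
    (hcyc : ∃ (a : {v : Fin n // G.dist u v ≤ r + 1})
      (p : (G.induce {v : Fin n | G.dist u v ≤ r + 1}).Walk a a), p.IsCycle) :
    ∃ x y : Fin n, G.Adj x y ∧ G.dist x u ≤ r + 1 ∧
      (G.deleteEdges {s(x, y)}).Connected ∧
      (∀ w : Fin n, (G.deleteEdges {s(x, y)}).dist x w ≤ G.dist x w + (1 + 2 * r)) ∧
      (∑ w : Fin n, (G.deleteEdges {s(x, y)}).dist x w)
        ≤ (∑ w : Fin n, G.dist x w) + n * (1 + 2 * r) := by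
  classical
  obtain ⟨a₀, p₀, hp₀⟩ := hcyc
  set S : Set (Fin n) := {v : Fin n | G.dist u v ≤ r + 1} with hS
  let f : G.induce S ↪g G := SimpleGraph.Embedding.induce S
  let c : G.Walk (a₀ : Fin n) (a₀ : Fin n) := p₀.map f.toHom
  have hcy : c.IsCycle := hp₀.map f.injective
  have hsupp : ∀ w ∈ c.support, G.dist u w ≤ r + 1 := by
    intro w hw
    rw [show c.support = p₀.support.map f.toHom from SimpleGraph.Walk.support_map _ _, List.mem_map] at hw
    obtain ⟨w', _, rfl⟩ := hw
    exact w'.2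
  -- choose a vertex of the cycle at maximal distance from u
  obtain ⟨v, hvmem, hvmax⟩ := Finset.exists_max_image c.support.toFinset
    (fun w => G.dist u w) ⟨_, List.mem_toFinset.2 c.start_mem_support⟩
  rw [List.mem_toFinset] at hvmem
  have hvmax' : ∀ w ∈ c.support, G.dist u w ≤ G.dist u v := fun w hw =>
    hvmax w (List.mem_toFinset.2 hw)
  have hvball : G.dist u v ≤ r + 1 := hsupp v hvmem
  -- rotate the cycle to start at v
  have hcy' : (c.rotate v hvmem).IsCycle := hcy.rotate hvmem
  have hsub : ∀ w ∈ (c.rotate v hvmem).support, w ∈ c.support := by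
    intro w hw
    rw [SimpleGraph.Walk.rotate, SimpleGraph.Walk.mem_support_append_iff] at hw
    rcases hw with hw | hw
    · exact c.support_dropUntil_subset hvmem hw
    · exact c.support_takeUntil_subset hvmem hw
  -- decompose the rotated cycle
  obtain ⟨a, haadj, p, hcons⟩ : ∃ (a : Fin n) (h : G.Adj v a) (p : G.Walk a v),
      c.rotate v hvmem = SimpleGraph.Walk.cons h p := by
    cases hcc : c.rotate v hvmem with
    | nil => exact absurd hcc hcy'.ne_nil
    | cons h p => exact ⟨_, h, p, rfl⟩
  obtain ⟨b, q, hbadj, hconcat⟩ := SimpleGraph.Walk.exists_cons_eq_concat haadj p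
  have hda : G.dist u a ≤ G.dist u v := by
    refine hvmax' a (hsub a ?_)
    rw [hcons, SimpleGraph.Walk.support_cons]
    exact List.mem_cons_of_mem _ p.start_mem_support
  have hdb : G.dist u b ≤ G.dist u v := by
    refine hvmax' b (hsub b ?_)
    rw [hcons, hconcat, SimpleGraph.Walk.support_concat,
      List.mem_append]
    exact Or.inl q.end_mem_support
  -- a ≠ b
  have h1 : (c.rotate v hvmem).edges = s(v, a) :: p.edges := by
    rw [hcons, SimpleGraph.Walk.edges_cons]
  have hedges : s(v, a) :: p.edges = q.edges ++ [s(b, v)] := by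
    have h2 : (c.rotate v hvmem).edges = q.edges ++ [s(b, v)] := by
      rw [hcons, hconcat, SimpleGraph.Walk.edges_concat, List.concat_eq_append]
    rw [← h1, h2]
  have hnodup : ((c.rotate v hvmem).edges).Nodup := hcy'.isCircuit.isTrail.edges_nodup
  have hab : a ≠ b := by
    intro hab
    subst hab
    have hnodup' : (s(v, a) :: p.edges).Nodup := h1 ▸ hnodup
    have hnotin : s(v, a) ∉ p.edges := (List.nodup_cons.mp hnodup').1
    have hqlen : 2 ≤ q.edges.length := by
      have h3 : 3 ≤ (c.rotate v hvmem).length := hcy'.three_le_length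
      have : (c.rotate v hvmem).length = q.length + 1 := by
        rw [hcons, hconcat, SimpleGraph.Walk.length_concat]
      rw [SimpleGraph.Walk.length_edges]
      omega
    have hin : s(a, v) ∈ p.edges := by
      have htail : p.edges = (q.edges ++ [s(a, v)]).tail := by
        rw [← hedges, List.tail_cons]
      cases hq : q.edges with
      | nil => rw [hq] at hqlen; simp at hqlen
      | cons e es =>
        rw [htail, hq]
        simp
    rw [Sym2.eq_swap] at hin
    exact hnotin hin
  -- v ≠ u
  have hvu : v ≠ u := by
    intro hvu
    subst hvu
    have : G.dist v a = 0 := by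
      have : G.dist v v = 0 := by simp
      omega
    have := (hconn.preconnected v a).dist_eq_zero_iff.mp this
    exact G.ne_of_adj haadj this
  -- a shortest path from u to v, with penultimate vertex z
  obtain ⟨P, hPpath, hPlen⟩ := hconn.exists_path_of_dist u v
  obtain ⟨z, Q, hz, hPQ⟩ : ∃ (z : Fin n) (Q : G.Walk u z) (hz : G.Adj z v),
      P = Q.concat hz := by
    cases P with
    | nil => exact absurd rfl hvu.symm
    | cons h₀ P' =>
      obtain ⟨x', q', h', heq⟩ := SimpleGraph.Walk.exists_cons_eq_concat h₀ P'
      exact ⟨x', q', h', heq⟩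
  -- choose the neighbor y of v avoiding z
  set y : Fin n := if a = z then b else a with hy
  have hyadj : G.Adj v y := by
    rw [hy]; split
    · exact hbadj.symm
    · exact haadj
  have hyz : y ≠ z := by
    rw [hy]; split
    · rename_i h; exact fun hbz => hab (h.trans hbz.symm)
    · assumption
  have hdy : G.dist u y ≤ G.dist u v := by
    rw [hy]; split
    · exact hdb
    · exact hda
  -- P avoids the edge s(v,y)
  have hveP : s(v, y) ∉ P.edges := by
    rw [hPQ, SimpleGraph.Walk.edges_concat, List.concat_eq_append]
    intro hmem
    rw [List.mem_append, List.mem_singleton] at hmem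
    rcases hmem with hmem | hmem
    · have hvQ : v ∈ Q.support := Q.fst_mem_support_of_mem_edges hmem
      have hnd := hPpath.support_nodup
      rw [hPQ, SimpleGraph.Walk.support_concat] at hnd
      exact (List.disjoint_of_nodup_append hnd) hvQ (List.mem_singleton.mpr rfl)
    · rw [Sym2.eq_iff] at hmem
      rcases hmem with ⟨hvz, hyv⟩ | ⟨-, hyz'⟩
      · exact G.ne_of_adj hyadj hyv.symm
      · exact hyz hyz'
  -- a shortest path from u to y avoids the edge s(v,y)
  obtain ⟨P', hP'path, hP'len⟩ := hconn.exists_path_of_dist u y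
  have hveP' : s(v, y) ∉ P'.edges := by
    intro hmem
    obtain ⟨q₁, hq₁⟩ := aux_endpoint_edge P' hP'path hmem
    have h1 : G.dist u v ≤ q₁.length := SimpleGraph.dist_le q₁
    omega
  -- the detour
  let D : (G.deleteEdges {s(v, y)}).Walk v y :=
    (P.toDeleteEdge _ hveP).reverse.append (P'.toDeleteEdge _ hveP')
  have hDlen : D.length ≤ 2 * r + 2 := by
    have : D.length = P.length + P'.length := by
      simp [D, SimpleGraph.Walk.length_append, SimpleGraph.Walk.length_reverse]
    omega
  -- key distance bound
  have key : ∀ w : Fin n, (G.deleteEdges {s(v, y)}).dist v w ≤ G.dist v w + (1 + 2 * r) := by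
    intro w
    obtain ⟨pw, hpw, hpwlen⟩ := hconn.exists_path_of_dist v w
    obtain ⟨q₂, hq₂⟩ := aux_replace D pw
    have hcnt : pw.edges.count s(v, y) ≤ 1 :=
      List.nodup_iff_count_le_one.mp hpw.edges_nodup _
    have hle : (G.deleteEdges {s(v, y)}).dist v w ≤ q₂.length := SimpleGraph.dist_le q₂
    interval_cases h : pw.edges.count s(v, y) <;> omega
  -- conclusions
  refine ⟨v, y, hyadj, ?_, ?_, key, ?_⟩
  · rw [SimpleGraph.dist_comm]; exact hvball
  · rw [SimpleGraph.connected_iff]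
    refine ⟨fun s t => ?_, hconn.nonempty⟩
    obtain ⟨w⟩ := hconn.preconnected s t
    obtain ⟨q₂, -⟩ := aux_replace D w
    exact ⟨q₂⟩
  · calc (∑ w : Fin n, (G.deleteEdges {s(v, y)}).dist v w)
        ≤ ∑ w : Fin n, (G.dist v w + (1 + 2 * r)) := Finset.sum_le_sum fun w _ => key w
      _ = (∑ w : Fin n, G.dist v w) + n * (1 + 2 * r) := by
          rw [Finset.sum_add_distrib, Finset.sum_const, Finset.card_univ,
            Fintype.card_fin, smul_eq_mul]
end

section
/- Let $n \geq 3$ and let $c > 0$ be a real constant. Let $f : \mathbb{N} \to \mathbb{N}$ be a nondecreasing function with $f(k) \geq \min(k, n)$ for all $k$, and suppose that for all $k \geq 1$: $f(4k) \geq \min\left(\frac{n+1}{2},\ \frac{k \cdot f(k)}{c \log_2 n}\right)$. Then the smallest $K$ with $f(K) > n/2$ satisfies $K \leq 2^{C\sqrt{\log_2 n}}$ for some constant $C$ depending only on $c$. -/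
private lemma self_le_two_rpow (s : ℝ) (hs : 0 ≤ s) : s ≤ (2:ℝ)^s := by
  rw [Real.rpow_def_of_pos two_pos]
  have h1 := Real.add_one_le_exp (Real.log 2 * s - 1)
  have h2 : Real.exp (Real.log 2 * s - 1) * Real.exp 1 = Real.exp (Real.log 2 * s) := by
    rw [← Real.exp_add]; ring_nf
  have hl := Real.log_two_gt_d9
  have he := Real.exp_one_gt_d9
  nlinarith [Real.exp_pos (Real.log 2 * s - 1), mul_nonneg (Real.log_nonneg one_le_two) hs]

set_option maxHeartbeats 1000000 in
/-- Abstract growth recursion: if a monotone ball-size function satisfies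
`f k ≥ min k n` and the expansion inequality
`f(4k) ≥ min((n+1)/2, k·f(k)/(c·log₂ n))`, then the smallest `K` with
`f K > n/2` satisfies `K ≤ 2^(C√(log₂ n))` for a constant `C` depending only
on `c`. -/
theorem stmt_15 (c : ℝ) (hc : 0 < c) :
    ∃ C : ℝ, 0 < C ∧ ∀ n : ℕ, 3 ≤ n → ∀ f : ℕ → ℕ, Monotone f →
      (∀ k : ℕ, min k n ≤ f k) →
      (∀ k : ℕ, 1 ≤ k →
        min (((n : ℝ) + 1) / 2) ((k * f k : ℝ) / (c * Real.logb 2 n)) ≤ (f (4 * k) : ℝ)) →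
      ∀ K : ℕ, ((f K : ℝ) > (n : ℝ) / 2 ∧ ∀ j < K, ¬ ((f j : ℝ) > (n : ℝ) / 2)) →
        (K : ℝ) ≤ 2 ^ (C * Real.sqrt (Real.logb 2 n)) := by
  have hClog : 0 ≤ Real.logb 2 (2*c+3) := Real.logb_nonneg one_lt_two (by linarith)
  refine ⟨Real.logb 2 (2*c+3) + 6, by linarith, ?_⟩
  intro n hn f hf hmin hrec K hK
  obtain ⟨hK1, hK2⟩ := hK
  have key : ∀ m : ℕ, (n:ℝ)/2 < (f m : ℝ) → K ≤ m := by
    intro m hm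
    by_contra h
    exact hK2 m (by omega) hm
  have hn3 : (3:ℝ) ≤ (n:ℝ) := by exact_mod_cast hn
  have hnpos : (0:ℝ) < n := by linarith
  have hlogb1 : 1 ≤ Real.logb 2 n := by
    rw [show (1:ℝ) = Real.logb 2 2 by simp]
    exact (Real.logb_le_logb one_lt_two two_pos hnpos).mpr (by linarith)
  set L := c * Real.logb 2 n with hLdef
  have hLpos : 0 < L := mul_pos hc (by linarith)
  set s := Real.sqrt (Real.logb 2 n) with hsdef
  have hs1 : 1 ≤ s := Real.one_le_sqrt.mpr hlogb1
  have hs2 : s^2 = Real.logb 2 n := Real.sq_sqrt (by linarith)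
  set k₀ : ℕ := ⌈2*L⌉₊ + 2 with hk₀def
  have hk₀2 : 2 ≤ k₀ := by omega
  have hk₀L : 2*L ≤ (k₀:ℝ) := by
    have := Nat.le_ceil (2*L)
    have : (⌈2*L⌉₊ : ℝ) ≤ (k₀ : ℝ) := by exact_mod_cast Nat.le.intro rfl
    linarith [Nat.le_ceil (2*L)]
  have hk₀ub : (k₀:ℝ) ≤ 2*L + 3 := by
    have h := Nat.ceil_lt_add_one (by positivity : (0:ℝ) ≤ 2*L)
    have : (k₀:ℝ) = (⌈2*L⌉₊ : ℝ) + 2 := by exact_mod_cast rfl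
    linarith
  -- main induction
  have claim : ∀ i : ℕ, K ≤ 4^i * k₀ ∨ (2:ℝ)^(i^2) * (k₀:ℝ) ≤ (f (4^i * k₀) : ℝ) := by
    intro i
    induction i with
    | zero =>
      simp only [pow_zero, one_mul]
      by_cases hcase : n ≤ k₀
      · left
        apply key
        have : (n:ℕ) ≤ f k₀ := le_trans (by simp [min_eq_right hcase]) (hmin k₀)
        have : (n:ℝ) ≤ (f k₀ : ℝ) := by exact_mod_cast this
        linarith
      · right
        have h1 : k₀ ≤ f k₀ := le_trans (by simp [min_eq_left (le_of_lt (lt_of_not_ge hcase))]) (hmin k₀)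
        have h2 : (k₀:ℝ) ≤ (f k₀ : ℝ) := by exact_mod_cast h1
        simpa using h2
    | succ i ih =>
      rcases ih with h | h
      · left
        calc K ≤ 4^i * k₀ := h
          _ ≤ 4^(i+1) * k₀ := by
            have : (4:ℕ)^i ≤ 4^(i+1) := Nat.pow_le_pow_right (by norm_num) (by omega)
            exact Nat.mul_le_mul_right _ this
      · set k : ℕ := 4^i * k₀ with hkdef
        have hk1 : 1 ≤ k := by
          have : 1 ≤ (4:ℕ)^i := Nat.one_le_pow _ _ (by norm_num)
          calc 1 ≤ 1 * 2 := by norm_num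
            _ ≤ 4^i * k₀ := Nat.mul_le_mul this hk₀2
        have hrk := hrec k hk1
        have h4k : 4 * k = 4^(i+1) * k₀ := by rw [hkdef]; ring
        rcases le_total (((n:ℝ)+1)/2) ((k * f k : ℝ) / (c * Real.logb 2 n)) with hm | hm
        · left
          apply key
          rw [← h4k]
          rw [min_eq_left hm] at hrk
          linarith
        · right
          rw [min_eq_right hm] at hrk
          rw [← h4k]
          refine le_trans ?_ hrk
          -- need: 2^((i+1)^2) * k₀ ≤ k * f k / L
          have hkr : (k:ℝ) = (2:ℝ)^(2*i) * (k₀:ℝ) := by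
            rw [hkdef]
            push_cast
            rw [pow_mul]
            norm_num
          have hfk : (2:ℝ)^(i^2) * (k₀:ℝ) ≤ (f k : ℝ) := h
          rw [le_div_iff₀ hLpos]
          have hexp : (2:ℝ)^((i+1)^2) = (2:ℝ)^(i^2) * (2:ℝ)^(2*i) * 2 := by
            rw [show (i+1)^2 = i^2 + 2*i + 1 by ring, pow_add, pow_add, pow_one]
          have hk₀pos : (0:ℝ) < (k₀:ℝ) := by exact_mod_cast (by omega : 0 < k₀)
          have hA : (0:ℝ) < (2:ℝ)^(i^2) := by positivity
          have hB : (0:ℝ) < (2:ℝ)^(2*i) := by positivity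
          calc (2:ℝ)^((i+1)^2) * (k₀:ℝ) * L
              = ((2:ℝ)^(i^2) * (2:ℝ)^(2*i) * (k₀:ℝ)) * (2 * L) := by rw [hexp]; ring
            _ ≤ ((2:ℝ)^(i^2) * (2:ℝ)^(2*i) * (k₀:ℝ)) * (k₀:ℝ) := by
                apply mul_le_mul_of_nonneg_left hk₀L (by positivity)
            _ = ((2:ℝ)^(2*i) * (k₀:ℝ)) * ((2:ℝ)^(i^2) * (k₀:ℝ)) := by ring
            _ ≤ (k:ℝ) * (f k : ℝ) := by
                rw [hkr]
                apply mul_le_mul_of_nonneg_left hfk (by positivity)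
  -- apply the claim at i = ⌈s⌉₊
  set i : ℕ := ⌈s⌉₊ with hidef
  have hsi : s ≤ (i:ℝ) := Nat.le_ceil s
  have hKle : K ≤ 4^i * k₀ := by
    rcases claim i with h | h
    · exact h
    · apply key
      refine lt_of_lt_of_le ?_ h
      have hpow : (n:ℝ) ≤ (2:ℝ)^(i^2) := by
        have h1 : (n:ℝ) = (2:ℝ)^(Real.logb 2 n) := (Real.rpow_logb two_pos (by norm_num) hnpos).symm
        have h2 : Real.logb 2 n ≤ ((i^2 : ℕ) : ℝ) := by
          rw [← hs2]
          push_cast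
          nlinarith
        calc (n:ℝ) = (2:ℝ)^(Real.logb 2 n) := h1
          _ ≤ (2:ℝ)^(((i^2:ℕ)):ℝ) := Real.rpow_le_rpow_of_exponent_le one_le_two h2
          _ = (2:ℝ)^(i^2 : ℕ) := Real.rpow_natCast 2 _
      have hk₀1 : (1:ℝ) ≤ (k₀:ℝ) := by exact_mod_cast (by omega : 1 ≤ k₀)
      nlinarith
  -- final bound
  have hKr : (K:ℝ) ≤ (4:ℝ)^i * (k₀:ℝ) := by
    have : ((4^i * k₀ : ℕ) : ℝ) = (4:ℝ)^i * (k₀:ℝ) := by push_cast; ring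
    rw [← this]
    exact_mod_cast hKle
  have hi_ub : (i:ℝ) ≤ s + 1 := le_of_lt (Nat.ceil_lt_add_one (by linarith))
  have h4i : (4:ℝ)^i ≤ (2:ℝ)^(2*s+2) := by
    have e1 : (4:ℝ)^i = (2:ℝ)^(2*i) := by rw [pow_mul]; norm_num
    rw [e1, ← Real.rpow_natCast 2 (2*i)]
    apply Real.rpow_le_rpow_of_exponent_le one_le_two
    push_cast
    linarith
  have hs2pow : s^2 ≤ (2:ℝ)^(2*s) := by
    have h1 : s ≤ (2:ℝ)^s := self_le_two_rpow s (by linarith)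
    have h2 : (0:ℝ) ≤ s := by linarith
    have h3 : s^2 ≤ ((2:ℝ)^s)^2 := by nlinarith [Real.rpow_nonneg (by norm_num : (0:ℝ) ≤ 2) s]
    have h4 : ((2:ℝ)^s)^2 = (2:ℝ)^(2*s) := by
      rw [sq, ← Real.rpow_add two_pos]; ring_nf
    linarith
  have hk₀ub2 : (k₀:ℝ) ≤ (2*c+3) * (2:ℝ)^(2*s) := by
    have hL2 : L = c * s^2 := by rw [hLdef, hs2]
    have h1 : (k₀:ℝ) ≤ 2*c*s^2 + 3 := by rw [hL2] at hk₀ub; linarith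
    have h2 : 2*c*s^2 + 3 ≤ (2*c+3)*s^2 := by nlinarith
    have h3 : (2*c+3)*s^2 ≤ (2*c+3) * (2:ℝ)^(2*s) :=
      mul_le_mul_of_nonneg_left hs2pow (by linarith : (0:ℝ) ≤ 2*c+3)
    linarith
  have hfinal : (K:ℝ) ≤ (2*c+3) * (2:ℝ)^(4*s+2) := by
    have h1 : (4:ℝ)^i * (k₀:ℝ) ≤ (2:ℝ)^(2*s+2) * ((2*c+3) * (2:ℝ)^(2*s)) := by
      apply mul_le_mul h4i hk₀ub2 (by positivity) (by positivity)
    have h2 : (2:ℝ)^(2*s+2) * (2:ℝ)^(2*s) = (2:ℝ)^(4*s+2) := by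
      rw [← Real.rpow_add two_pos]
      congr 1
      ring
    calc (K:ℝ) ≤ (4:ℝ)^i * (k₀:ℝ) := hKr
      _ ≤ (2:ℝ)^(2*s+2) * ((2*c+3) * (2:ℝ)^(2*s)) := h1
      _ = (2*c+3) * ((2:ℝ)^(2*s+2) * (2:ℝ)^(2*s)) := by ring
      _ = (2*c+3) * (2:ℝ)^(4*s+2) := by rw [h2]
  have hcpow : (2*c+3 : ℝ) = (2:ℝ)^(Real.logb 2 (2*c+3)) := (Real.rpow_logb two_pos (by norm_num) (by linarith)).symm
  calc (K:ℝ) ≤ (2*c+3) * (2:ℝ)^(4*s+2) := hfinal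
    _ = (2:ℝ)^(Real.logb 2 (2*c+3)) * (2:ℝ)^(4*s+2) := by rw [← hcpow]
    _ = (2:ℝ)^(Real.logb 2 (2*c+3) + (4*s+2)) := (Real.rpow_add two_pos _ _).symm
    _ ≤ (2:ℝ)^((Real.logb 2 (2*c+3) + 6) * s) := by
        apply Real.rpow_le_rpow_of_exponent_le one_le_two
        nlinarith
end
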